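/- For every even Schwartz function φ: ℝ → ℂ and every integer j ≥ 0, ∫_0^∞ ϱ^j (d/dϱ)^j φ̂(ϱ) dϱ = (−1)^j · π · j! · φ(0). -/

import Mathlib

open MeasureTheory Filter
open scoped ENNReal NNReal RealInnerProductSpace BigOperators Topology

noncomputable section

/-- `ℝ^d` as a Euclidean space. -/
abbrev Euc (d : ℕ) : Type := EuclideanSpace ℝ (Fin d)

/-- The geometric setup: `Ω` is a bounded open convex subset of `ℝ^d` containing the origin,
`ρ` is its Minkowski functional, which is assumed to be smooth away from the origin and
positive away from the origin. -/
structure IsMinkowskiGauge (d : ℕ) (Ω : Set (Euc d)) (ρ : Euc d → ℝ) : Prop where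
  isOpen : IsOpen Ω
  convex : Convex ℝ Ω
  isBounded : Bornology.IsBounded Ω
  zero_mem : (0 : Euc d) ∈ Ω
  eq_gauge : ρ = gauge Ω
  smooth : ContDiffOn ℝ (⊤ : ℕ∞) ρ {(0 : Euc d)}ᶜ
  pos : ∀ ξ : Euc d, ξ ≠ 0 → 0 < ρ ξ

/-- Everywhere nonvanishing Gaussian curvature of `∂Ω = {ρ = 1}`: for every `ξ ≠ 0`
the Hessian of `ρ` at `ξ` has rank `d - 1`. -/
def HasNonvanishingCurvature (d : ℕ) (ρ : Euc d → ℝ) : Prop :=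
  ∀ ξ : Euc d, ξ ≠ 0 →
    LinearMap.rank ((fderiv ℝ (fderiv ℝ ρ) ξ : Euc d →L[ℝ] (Euc d →L[ℝ] ℝ)) :
      Euc d →ₗ[ℝ] (Euc d →L[ℝ] ℝ)) = (d - 1 : ℕ)

/-- The Fourier transform `f̂(ξ) = ∫ f(y) e^{−i⟨y,ξ⟩} dy` on `ℝ^d`. -/
def FTd {d : ℕ} (f : Euc d → ℂ) (ξ : Euc d) : ℂ :=
  ∫ y : Euc d, f y * Complex.exp (-(Complex.I * (⟪y, ξ⟫ : ℂ)))

/-- The Riesz mean `R^λ_{a,t} f(x) = (2π)^{-d} ∫ (1 - ρ(ξ)^a/t^a)_+^λ f̂(ξ) e^{i⟨x,ξ⟩} dξ`. -/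
def RieszMean {d : ℕ} (ρ : Euc d → ℝ) (a lam t : ℝ) (f : Euc d → ℂ) (x : Euc d) : ℂ :=
  (((2 * Real.pi) ^ d)⁻¹ : ℝ) •
    ∫ ξ : Euc d, ((max (1 - ρ ξ ^ a / t ^ a) 0) ^ lam : ℝ) •
      (FTd f ξ * Complex.exp (Complex.I * (⟪x, ξ⟫ : ℂ)))

/-- The critical index `λ(p) = d(1/p - 1/2) - 1/2`. -/
def criticalIndex (d : ℕ) (p : ℝ) : ℝ := (d : ℝ) * (1 / p - 1 / 2) - 1 / 2

/-- One-dimensional Fourier transform `φ̂(ϱ) = ∫ φ(s) e^{-isϱ} ds`. -/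
def FT1 (φ : ℝ → ℂ) (ϱ : ℝ) : ℂ :=
  ∫ s : ℝ, φ s * Complex.exp (-(Complex.I * (s : ℂ) * (ϱ : ℂ)))

/-- One-dimensional Fourier transform of a real-valued function. -/
def FT1R (Φ : ℝ → ℝ) : ℝ → ℂ := FT1 (fun s => (Φ s : ℂ))

/-- The pieces `h_{λ,ℓ}` of the decomposition of the Riesz multiplier. -/
def hfun (χ Φ Ψ : ℝ → ℝ) (lam : ℝ) : ℕ → ℝ → ℂ
  | 0 => fun ϱ => ((2 * Real.pi)⁻¹ * χ ϱ : ℝ) •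
      ∫ u : ℝ, ((max (1 - u) 0) ^ lam : ℝ) • FT1R Φ (ϱ - u)
  | (ℓ + 1) => fun ϱ => ((2 * Real.pi)⁻¹ * χ ϱ : ℝ) •
      ∫ u : ℝ, ((max (1 - u) 0) ^ lam : ℝ) •
        (((2 : ℝ) ^ ℓ) • FT1R Ψ ((2 : ℝ) ^ ℓ * (ϱ - u)))

/-- The data entering the construction of `h_{λ,ℓ}`: a cutoff `χ ∈ C_c^∞((1/2,2))`, an even
`Φ = Φ∘ ∈ C_c^∞(ℝ)` with `Φ∘ = 1` on `[-1/2,1/2]`, `supp Φ∘ ⊆ [-1,1]`, satisfying the moment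
cancellation conditions, and `Ψ(x) = Φ∘(x/2) - Φ∘(x)`. -/
structure HData (lam : ℝ) (N0 : ℕ) (χ Φ Ψ : ℝ → ℝ) : Prop where
  hχsm : ContDiff ℝ (⊤ : ℕ∞) χ
  hχsupp : Function.support χ ⊆ Set.Ioo (1/2 : ℝ) 2
  hΦsm : ContDiff ℝ (⊤ : ℕ∞) Φ
  hΦeven : ∀ s, Φ (-s) = Φ s
  hΦone : ∀ s : ℝ, |s| ≤ 1/2 → Φ s = 1
  hΦzero : ∀ s : ℝ, 1 ≤ |s| → Φ s = 0
  hΦcanc : ∀ j : ℕ, j ≤ N0 → (j : ℝ) ≠ lam →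
    (∫ ϱ in Set.Ioi (0 : ℝ), ((ϱ ^ lam : ℝ) : ℂ) * iteratedDeriv j (FT1R Φ) ϱ) = 0
  hΨ : Ψ = fun x => Φ (x / 2) - Φ x

/-- Inverse Fourier transform on `ℝ^d`. -/
def invFTd {d : ℕ} (m : Euc d → ℂ) (x : Euc d) : ℂ :=
  (((2 * Real.pi) ^ d)⁻¹ : ℝ) •
    ∫ ξ : Euc d, m ξ * Complex.exp (Complex.I * (⟪x, ξ⟫ : ℂ))

/-- The Fourier multiplier operator `m(D) f = (𝓕⁻¹ m) * f`. -/
def mulOp {d : ℕ} (m : Euc d → ℂ) (f : Euc d → ℂ) (x : Euc d) : ℂ :=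
  ∫ y : Euc d, invFTd m (x - y) * f y

/-- The Hardy–Littlewood maximal function. -/
def HLMaximal {d : ℕ} (w : Euc d → ℝ) (x : Euc d) : ℝ≥0∞ :=
  ⨆ r : {r : ℝ // 0 < r},
    (volume (Metric.ball x r.1))⁻¹ * ∫⁻ y in Metric.ball x r.1, ENNReal.ofReal (w y)

/-- `w` is an `A₁` weight. -/
structure IsA1Weight {d : ℕ} (w : Euc d → ℝ) : Prop where
  nonneg : ∀ x, 0 ≤ w x
  locInt : LocallyIntegrable w volume
  ne_zero : ¬ (w =ᵐ[(volume : Measure (Euc d))] (0 : Euc d → ℝ))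
  maximal_le : ∃ C : ℝ, ∀ᵐ x ∂(volume : Measure (Euc d)),
    HLMaximal w x ≤ ENNReal.ofReal (C * w x)

/-- `w` satisfies a reverse Hölder inequality with exponent `σ`. -/
def IsRH {d : ℕ} (σ : ℝ) (w : Euc d → ℝ) : Prop :=
  ∃ C : ℝ, ∀ (x : Euc d) (r : ℝ), 0 < r →
    ((volume (Metric.ball x r))⁻¹ *
        ∫⁻ y in Metric.ball x r, ENNReal.ofReal (w y) ^ σ) ^ (1 / σ) ≤
      ENNReal.ofReal C *
        ((volume (Metric.ball x r))⁻¹ * ∫⁻ y in Metric.ball x r, ENNReal.ofReal (w y))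

/-- The weighted `L^p(w)` (quasi-)norm. -/
def wLpNorm {d : ℕ} (p : ℝ) (w : Euc d → ℝ) (g : Euc d → ℂ) : ℝ≥0∞ :=
  (∫⁻ x, (‖g x‖₊ : ℝ≥0∞) ^ p * ENNReal.ofReal (w x)) ^ (1 / p)

/-- The weighted weak `L^{p,∞}(w)` (quasi-)norm. -/
def wWeakNorm {d : ℕ} (p : ℝ) (w : Euc d → ℝ) (g : Euc d → ℂ) : ℝ≥0∞ :=
  ⨆ α : {α : ℝ // 0 < α},
    ENNReal.ofReal α.1 *
      (∫⁻ x in {x : Euc d | α.1 < ‖g x‖}, ENNReal.ofReal (w x)) ^ (1 / p)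

/-- A (half-open, axes-parallel) cube `x + [0,s)^d` in `ℝ^d`. -/
def IsCube {d : ℕ} (Q : Set (Euc d)) : Prop :=
  ∃ (x : Euc d) (s : ℝ), 0 < s ∧ Q = {y : Euc d | ∀ i, y i ∈ Set.Ico (x i) (x i + s)}

/-- The average `⟨f⟩_{Q,p} = (|Q|⁻¹ ∫_Q |f|^p)^{1/p}`. -/
def cubeAvg {d : ℕ} (p : ℝ) (Q : Set (Euc d)) (f : Euc d → ℂ) : ℝ≥0∞ :=
  ((volume Q)⁻¹ * ∫⁻ x in Q, (‖f x‖₊ : ℝ≥0∞) ^ p) ^ (1 / p)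

/-- A `γ`-sparse (finite) family of cubes. -/
def IsSparseFamily {d : ℕ} (γ : ℝ) (𝔖 : Finset (Set (Euc d))) : Prop :=
  (∀ Q ∈ 𝔖, IsCube Q) ∧
  ∃ E : Set (Euc d) → Set (Euc d),
    (∀ Q ∈ 𝔖, MeasurableSet (E Q) ∧ E Q ⊆ Q ∧
      ENNReal.ofReal γ * volume Q ≤ volume (E Q)) ∧
    (𝔖 : Set (Set (Euc d))).Pairwise fun Q Q' => Disjoint (E Q) (E Q')

/-- The maximal sparse form `Λ*_{p,q}(f₁,f₂)` (supremum over `1/2`-sparse families). -/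
def sparseFormMax {d : ℕ} (p q : ℝ) (f₁ f₂ : Euc d → ℂ) : ℝ≥0∞ :=
  ⨆ 𝔖 : {𝔖 : Finset (Set (Euc d)) // IsSparseFamily (1/2) 𝔖},
    ∑ Q ∈ 𝔖.1, volume Q * cubeAvg p Q f₁ * cubeAvg q Q f₂

/-- The sparse bound `T ∈ Sp(p,q)`. -/
def SparseBound {d : ℕ} (p q : ℝ) (T : (Euc d → ℂ) → Euc d → ℂ) : Prop :=
  ∃ C : ℝ, ∀ f₁ f₂ : Euc d → ℂ,
    ContDiff ℝ (⊤ : ℕ∞) f₁ → HasCompactSupport f₁ →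
    ContDiff ℝ (⊤ : ℕ∞) f₂ → HasCompactSupport f₂ →
    ENNReal.ofReal ‖∫ x, T f₁ x * f₂ x‖ ≤ ENNReal.ofReal C * sparseFormMax p q f₁ f₂

/-- The exponent `r_*(p, p∘, r∘)`. -/
def rStar (d : ℕ) (p p0 r0 : ℝ) : ℝ :=
  if p ≤ 2 * ((d : ℝ) + 1) / ((d : ℝ) + 3) then
    (((d : ℝ) + 1) / ((d : ℝ) - 1) * (1 - 1 / p))⁻¹
  else
    ((1 / r0 * (((d : ℝ) + 3) / (2 * ((d : ℝ) + 1)) - 1 / p) +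
        1 / 2 * (1 / p - 1 / p0)) /
      (((d : ℝ) + 3) / (2 * ((d : ℝ) + 1)) - 1 / p0))⁻¹

/-- The exponent `q_*(p, p∘, r∘)`, the conjugate of `r_*(p, p∘, r∘)`. -/
def qStar (d : ℕ) (p p0 r0 : ℝ) : ℝ := (1 - 1 / rStar d p p0 r0)⁻¹

/-- The trapezoid `∏_d(λ)` with corners `P₁, P₂, P₃, P₄`. -/
def trapez (d : ℕ) (lam : ℝ) : Set (ℝ × ℝ) :=
  convexHull ℝ
    {((2*lam + (d:ℝ) + 1)/(2*(d:ℝ)), ((d:ℝ) - 2*lam - 1)/(2*(d:ℝ))),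
     ((2*lam + (d:ℝ) + 1)/(2*(d:ℝ)),
       ((d:ℝ) - 1)/(2*(d:ℝ)) + lam*((d:ℝ) + 1)/((d:ℝ)*((d:ℝ) - 1))),
     (((d:ℝ) - 1)/(2*(d:ℝ)) + lam*((d:ℝ) + 1)/((d:ℝ)*((d:ℝ) - 1)),
       (2*lam + (d:ℝ) + 1)/(2*(d:ℝ))),
     (((d:ℝ) - 2*lam - 1)/(2*(d:ℝ)), (2*lam + (d:ℝ) + 1)/(2*(d:ℝ)))}

/-- A dyadic cube `2^k(m + [0,1)^d)`, recorded by its generation `k` and position `m`. -/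
structure DyadicCube (d : ℕ) where
  k : ℤ
  m : Fin d → ℤ
deriving DecidableEq

/-- The subset of `ℝ^d` corresponding to a dyadic cube. -/
def DyadicCube.set {d : ℕ} (Q : DyadicCube d) : Set (Euc d) :=
  {x : Euc d | ∀ i, x i ∈ Set.Ico ((2:ℝ) ^ Q.k * (Q.m i : ℝ)) ((2:ℝ) ^ Q.k * ((Q.m i : ℝ) + 1))}

/-- `μ(𝔔) = Σ_{Q ∈ 𝔔} |Q|`. -/
def dyadicMeasure {d : ℕ} (𝔔 : Finset (DyadicCube d)) : ℝ≥0∞ :=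
  ∑ Q ∈ 𝔔, volume Q.set

/-- The class `𝒴_M` of normalized bump functions. -/
def MemYM (M : ℕ) (χ : ℝ → ℂ) : Prop :=
  ContDiff ℝ (M : ℕ∞) χ ∧ Function.support χ ⊆ Set.Ioo (1/2 : ℝ) 2 ∧
    ∑ ν ∈ Finset.range (M + 1), (⨆ s : ℝ, ‖iteratedDeriv ν χ s‖) ≤ 1

/-- The function `Σ_{j ≥ 1} 2^{j(d+1)/2} m_j(D)[Σ_{Q ∈ 𝔇_j} f_Q]` appearing in `VBR(p,r)`,
where `m_j(ξ) = χ_j(2^j(1 - ρ(ξ)))`. -/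
def vbrSum {d : ℕ} (ρ : Euc d → ℝ) (χ : ℕ → ℝ → ℂ) (𝔉 : Finset (DyadicCube d))
    (f : DyadicCube d → Euc d → ℂ) (x : Euc d) : ℂ :=
  Finset.sum ((𝔉.image (fun Q => Q.k)).filter (fun j => 1 ≤ j)) fun (j : ℤ) =>
    ((2:ℝ) ^ ((j : ℝ) * ((d : ℝ) + 1) / 2)) •
      mulOp (fun ξ => χ j.toNat ((2:ℝ) ^ j * (1 - ρ ξ)))
        (fun y => ∑ Q ∈ 𝔉.filter (fun Q' => Q'.k = j), f Q y) x

/-- The statement `VBR(p,r)`. -/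
def VBR (d : ℕ) (ρ : Euc d → ℝ) (p r : ℝ) : Prop :=
  ∃ (M : ℕ) (C : ℝ), 1 ≤ M ∧
    ∀ χ : ℕ → ℝ → ℂ, (∀ j : ℕ, 1 ≤ j → MemYM M (χ j)) →
    ∀ (𝔉 : Finset (DyadicCube d)) (f : DyadicCube d → Euc d → ℂ),
      (∀ Q ∈ 𝔉, Function.support (f Q) ⊆ closure Q.set) →
      eLpNorm (vbrSum ρ χ 𝔉 f) (ENNReal.ofReal r) volume ≤
        ENNReal.ofReal C *
          (∑ Q ∈ 𝔉, volume Q.set * eLpNorm (f Q) (ENNReal.ofReal p) volume ^ r) ^ (1 / r)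

/-- `Hyp(p∘, r∘)`: `VBR(p,r)` holds for all `p ∈ [2(d+1)/(d+3), p∘)`
and all `r ∈ [p, r_*(p,p∘,r∘))`. -/
def Hyp (d : ℕ) (ρ : Euc d → ℝ) (p0 r0 : ℝ) : Prop :=
  ∀ p r : ℝ, 2 * ((d : ℝ) + 1) / ((d : ℝ) + 3) ≤ p → p < p0 →
    p ≤ r → r < rStar d p p0 r0 → VBR d ρ p r

/-- The operator `A_{λ,ℓ} = 2^{ℓ(λ + (d+1)/2)} h_{λ,ℓ}(ρ(D))`. -/
def Aop {d : ℕ} (ρ : Euc d → ℝ) (h : ℕ → ℝ → ℂ) (lam : ℝ) (ℓ : ℕ)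
    (f : Euc d → ℂ) (x : Euc d) : ℂ :=
  ((2:ℝ) ^ ((ℓ : ℝ) * (lam + ((d : ℝ) + 1) / 2))) • mulOp (fun ξ => h ℓ (ρ ξ)) f x

/-- `𝒜_{s,𝔔} F = Σ_{ℓ ≥ s} Σ_{Q ∈ 𝔔_{ℓ-s}} A_{λ,ℓ}[F_Q 1_Q]`. -/
def AopSum {d : ℕ} (ρ : Euc d → ℝ) (h : ℕ → ℝ → ℂ) (lam : ℝ) (s : ℕ)
    (𝔔 : Finset (DyadicCube d)) (F : DyadicCube d → Euc d → ℂ) (x : Euc d) : ℂ :=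
  ∑ Q ∈ 𝔔, Aop ρ h lam (Q.k.toNat + s) (Q.set.indicator (F Q)) x

/-- `Ξ_{s,𝔔}[F,β] = Σ_{ℓ ≥ s} Σ_{Q ∈ 𝔔_{ℓ-s}} β(Q) A_{λ,ℓ}[F_Q 1_Q]`. -/
def XiSum {d : ℕ} (ρ : Euc d → ℝ) (h : ℕ → ℝ → ℂ) (lam : ℝ) (s : ℕ)
    (𝔔 : Finset (DyadicCube d)) (F : DyadicCube d → Euc d → ℂ)
    (β : DyadicCube d → ℂ) (x : Euc d) : ℂ :=
  ∑ Q ∈ 𝔔, β Q * Aop ρ h lam (Q.k.toNat + s) (Q.set.indicator (F Q)) x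

/-- `‖F‖_{ℓ^∞(L^p)} = sup_{Q ∈ 𝔔} ‖F_Q‖_{L^p}`. -/
def supLp {d : ℕ} (p : ℝ) (𝔔 : Finset (DyadicCube d))
    (F : DyadicCube d → Euc d → ℂ) : ℝ≥0∞ :=
  ⨆ Q ∈ 𝔔, eLpNorm (F Q) (ENNReal.ofReal p) volume

/-- `‖β‖_{ℓ^{r,1}(μ)} = ∫_0^∞ μ({Q ∈ 𝔔 : |β(Q)| > α})^{1/r} dα`. -/
def lorentzNorm {d : ℕ} (r : ℝ) (𝔔 : Finset (DyadicCube d))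
    (β : DyadicCube d → ℂ) : ℝ≥0∞ :=
  ∫⁻ α in Set.Ioi (0:ℝ),
    (∑ Q ∈ 𝔔, if α < ‖β Q‖ then volume Q.set else 0) ^ (1 / r)

open Set
open scoped FourierTransform

lemma FT1_eq_fourier (φ : ℝ → ℂ) (ϱ : ℝ) :
    FT1 φ ϱ = 𝓕 φ ((2 * Real.pi)⁻¹ * ϱ) := by
  rw [Real.fourier_eq']
  unfold FT1
  congr 1
  ext s
  rw [smul_eq_mul, mul_comm]
  congr 1
  have h : ⟪s, (2 * Real.pi)⁻¹ * ϱ⟫ = s * ((2 * Real.pi)⁻¹ * ϱ) := by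
    simp only [RCLike.inner_apply, conj_trivial]; ring
  have h3 : (-2 * Real.pi * (s * ((2 * Real.pi)⁻¹ * ϱ))) = -(s * ϱ) := by
    have h2 : (2 * Real.pi) ≠ 0 := by positivity
    field_simp
  rw [h, h3]
  push_cast
  ring

/-- the scaling equivalence -/
def scaleEquiv : ℝ ≃L[ℝ] ℝ :=
  (LinearEquiv.smulOfNeZero ℝ ℝ (2 * Real.pi)⁻¹
    (by positivity)).toContinuousLinearEquiv

def FT1Schwartz (φ : SchwartzMap ℝ ℂ) : SchwartzMap ℝ ℂ :=
  SchwartzMap.compCLMOfContinuousLinearEquiv ℝ scaleEquiv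
    (SchwartzMap.fourierTransformCLM ℝ φ)

lemma FT1Schwartz_coe (φ : SchwartzMap ℝ ℂ) : ⇑(FT1Schwartz φ) = FT1 ⇑φ := by
  funext ϱ
  rw [FT1_eq_fourier]
  simp [FT1Schwartz, scaleEquiv, Function.comp, smul_eq_mul]
  rfl

lemma integrable_pow_mul_iteratedDeriv (ψ : SchwartzMap ℝ ℂ) (k m : ℕ) :
    Integrable (fun ϱ : ℝ => (ϱ : ℂ) ^ k * iteratedDeriv m (⇑ψ) ϱ) := by
  have h := ψ.integrable_pow_mul_iteratedFDeriv (volume : Measure ℝ) k m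
  refine h.mono ?_ (Eventually.of_forall fun x => ?_)
  · exact (Continuous.mul (by continuity)
      ((ψ.smooth ⊤).continuous_iteratedDeriv m (by exact_mod_cast le_top))).aestronglyMeasurable
  · have h1 : ‖(x : ℂ) ^ k * iteratedDeriv m (⇑ψ) x‖
        = ‖x‖ ^ k * ‖iteratedFDeriv ℝ m (⇑ψ) x‖ := by
      rw [norm_mul, norm_pow, Complex.norm_real, norm_iteratedFDeriv_eq_norm_iteratedDeriv]
    rw [h1, Real.norm_eq_abs]
    exact le_abs_self _

lemma tendsto_pow_mul_iteratedDeriv (ψ : SchwartzMap ℝ ℂ) (k m : ℕ) :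
    Tendsto (fun ϱ : ℝ => (ϱ : ℂ) ^ k * iteratedDeriv m (⇑ψ) ϱ) atTop (𝓝 0) := by
  obtain ⟨C, hC⟩ := ψ.decay (k + 1) m
  have hC := hC.2
  apply squeeze_zero_norm' (a := fun x : ℝ => C / x)
  · filter_upwards [eventually_ge_atTop (1 : ℝ)] with x hx
    have hx0 : (0 : ℝ) < x := lt_of_lt_of_le one_pos hx
    have h1 := hC x
    rw [norm_iteratedFDeriv_eq_norm_iteratedDeriv] at h1
    have : ‖(x : ℂ) ^ k * iteratedDeriv m (⇑ψ) x‖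
        = |x| ^ k * ‖iteratedDeriv m (⇑ψ) x‖ := by
      simp [norm_mul, norm_pow]
    rw [this, abs_of_pos hx0]
    rw [div_eq_inv_mul]
    calc x ^ k * ‖iteratedDeriv m (⇑ψ) x‖
        = x⁻¹ * (x ^ (k + 1) * ‖iteratedDeriv m (⇑ψ) x‖) := by
          field_simp; ring
      _ ≤ x⁻¹ * C := by
          apply mul_le_mul_of_nonneg_left _ (by positivity)
          calc x ^ (k + 1) * ‖iteratedDeriv m (⇑ψ) x‖
              = ‖x‖ ^ (k + 1) * ‖iteratedDeriv m (⇑ψ) x‖ := by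
                rw [Real.norm_eq_abs, abs_of_pos hx0]
            _ ≤ C := h1
  · exact Tendsto.div_atTop tendsto_const_nhds tendsto_id

lemma parts_step (ψ : SchwartzMap ℝ ℂ) (k : ℕ) :
    (∫ ϱ in Ioi (0:ℝ), (ϱ : ℂ) ^ (k + 1) * iteratedDeriv (k + 1) (⇑ψ) ϱ)
      = -(k + 1 : ℂ) * ∫ ϱ in Ioi (0:ℝ), (ϱ : ℂ) ^ k * iteratedDeriv k (⇑ψ) ϱ := by
  set f : ℝ → ℂ := fun ϱ => (ϱ : ℂ) ^ (k + 1) * iteratedDeriv k (⇑ψ) ϱ with hf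
  set g : ℝ → ℂ := fun ϱ =>
    ((k + 1 : ℂ) * (ϱ : ℂ) ^ k) * iteratedDeriv k (⇑ψ) ϱ
      + (ϱ : ℂ) ^ (k + 1) * iteratedDeriv (k + 1) (⇑ψ) ϱ with hg
  have hderiv : ∀ x ∈ Ici (0:ℝ), HasDerivAt f (g x) x := by
    intro x _
    have h1 : HasDerivAt (fun ϱ : ℝ => (ϱ : ℂ) ^ (k + 1))
        ((k + 1 : ℂ) * (x : ℂ) ^ k) x := by
      simpa using (hasDerivAt_pow (k + 1) ((x : ℝ) : ℂ)).comp_ofReal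
    have h2 : HasDerivAt (iteratedDeriv k (⇑ψ)) (iteratedDeriv (k + 1) (⇑ψ) x) x := by
      rw [iteratedDeriv_succ]
      exact (((ψ.smooth ⊤).differentiable_iteratedDeriv k
        (by exact_mod_cast lt_top_iff_ne_top.mpr (by simp))) x).hasDerivAt
    exact h1.mul h2
  have hint1 := (integrable_pow_mul_iteratedDeriv ψ k k).integrableOn (s := Ioi (0:ℝ))
  have hint2 := (integrable_pow_mul_iteratedDeriv ψ (k+1) (k+1)).integrableOn (s := Ioi (0:ℝ))
  have hgint : IntegrableOn g (Ioi (0:ℝ)) := by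
    apply Integrable.add _ hint2
    simpa [mul_assoc] using hint1.const_mul (k + 1 : ℂ)
  have htends : Tendsto f atTop (𝓝 0) := tendsto_pow_mul_iteratedDeriv ψ (k+1) k
  have key := integral_Ioi_of_hasDerivAt_of_tendsto' hderiv hgint htends
  have hf0 : f 0 = 0 := by simp [hf]
  rw [hf0, sub_zero] at key
  have hsplit : (∫ ϱ in Ioi (0:ℝ), g ϱ)
      = (k + 1 : ℂ) * (∫ ϱ in Ioi (0:ℝ), (ϱ : ℂ) ^ k * iteratedDeriv k (⇑ψ) ϱ)
        + ∫ ϱ in Ioi (0:ℝ), (ϱ : ℂ) ^ (k + 1) * iteratedDeriv (k + 1) (⇑ψ) ϱ := by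
    rw [hg]
    rw [integral_add (by simpa [mul_assoc] using hint1.const_mul (k + 1 : ℂ)) hint2]
    congr 1
    rw [← integral_const_mul]
    congr 1
    ext ϱ
    ring
  rw [hsplit] at key
  linear_combination key

lemma main_aux (ψ : SchwartzMap ℝ ℂ) (j : ℕ) :
    (∫ ϱ in Ioi (0:ℝ), (ϱ : ℂ) ^ j * iteratedDeriv j (⇑ψ) ϱ)
      = (-1 : ℂ) ^ j * (Nat.factorial j : ℂ) * ∫ ϱ in Ioi (0:ℝ), ψ ϱ := by
  induction j with
  | zero => simp
  | succ k ih =>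
    rw [parts_step, ih, Nat.factorial_succ]
    push_cast
    ring

lemma even_integral (ψ : ℝ → ℂ) (hint : Integrable ψ) (he : ∀ x, ψ (-x) = ψ x) :
    (∫ x, ψ x) = 2 * ∫ x in Ioi (0:ℝ), ψ x := by
  have h1 : (∫ x, ψ x) = (∫ x in Iic (0:ℝ), ψ x) + ∫ x in Ioi (0:ℝ), ψ x := by
    rw [← integral_add_compl measurableSet_Iic hint, compl_Iic]
  have h2 : (∫ x in Iic (0:ℝ), ψ x) = ∫ x in Ioi (0:ℝ), ψ x := by
    have h3 := integral_comp_neg_Ioi (0:ℝ) ψ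
    simp only [neg_zero] at h3
    rw [← h3]
    exact setIntegral_congr_fun measurableSet_Ioi fun x _ => (he x)
  rw [h1, h2]
  ring

lemma FT1_even (φ : ℝ → ℂ) (hφ : ∀ s, φ (-s) = φ s) (ϱ : ℝ) :
    FT1 φ (-ϱ) = FT1 φ ϱ := by
  unfold FT1
  calc (∫ s : ℝ, φ s * Complex.exp (-(Complex.I * (s : ℂ) * ((-ϱ : ℝ) : ℂ))))
      = ∫ s : ℝ, (fun s : ℝ => φ s * Complex.exp (-(Complex.I * (s : ℂ) * (ϱ : ℂ)))) (-s) := by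
        congr 1
        ext s
        simp only
        rw [hφ]
        push_cast
        ring_nf
    _ = _ := integral_neg_eq_self (fun s : ℝ => φ s * Complex.exp (-(Complex.I * (s : ℂ) * (ϱ : ℂ)))) volume

lemma integral_FT1 (φ : SchwartzMap ℝ ℂ) :
    (∫ ϱ : ℝ, FT1 ⇑φ ϱ) = 2 * Real.pi * φ 0 := by
  have h1 : (∫ ϱ : ℝ, FT1 ⇑φ ϱ) = ∫ ϱ : ℝ, (𝓕 ⇑φ) ((2 * Real.pi)⁻¹ * ϱ) := by
    simp_rw [FT1_eq_fourier]
  rw [h1, Measure.integral_comp_inv_mul_left (𝓕 ⇑φ) (2 * Real.pi)]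
  have h2 : (∫ u : ℝ, 𝓕 ⇑φ u) = φ 0 := by
    have hinv := φ.continuous.fourierInv_fourier_eq φ.integrable
      (by exact (SchwartzMap.fourierTransformCLM ℝ φ).integrable)
    have h0 := congrFun hinv 0
    rw [Real.fourierInv_eq] at h0
    simpa using h0
  rw [h2, abs_of_pos (by positivity : (0:ℝ) < 2 * Real.pi), Complex.real_smul]
  push_cast
  ring

/-- For an even Schwartz function `φ`,
`∫_0^∞ ϱ^j (d/dϱ)^j φ̂(ϱ) dϱ = (-1)^j π j! φ(0)`. -/
theorem integral_rpow_iteratedDeriv_fourier_even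
    (φ : SchwartzMap ℝ ℂ) (hφ : ∀ s : ℝ, φ (-s) = φ s) (j : ℕ) :
    (∫ ϱ in Set.Ioi (0:ℝ), (ϱ : ℂ) ^ j * iteratedDeriv j (FT1 ⇑φ) ϱ) =
      (-1 : ℂ) ^ j * (Real.pi : ℂ) * (Nat.factorial j : ℂ) * φ 0 := by
  have hcoe : FT1 ⇑φ = ⇑(FT1Schwartz φ) := (FT1Schwartz_coe φ).symm
  rw [hcoe, main_aux]
  have heven : ∀ x : ℝ, (FT1Schwartz φ) (-x) = (FT1Schwartz φ) x := by
    intro x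
    have := FT1_even ⇑φ hφ x
    rw [hcoe] at this
    exact this
  have h2 := even_integral ⇑(FT1Schwartz φ) (FT1Schwartz φ).integrable heven
  have h3 : (∫ x : ℝ, (FT1Schwartz φ) x) = 2 * Real.pi * φ 0 := by
    rw [← hcoe] at *
    exact integral_FT1 φ
  have h4 : (∫ ϱ in Ioi (0:ℝ), (FT1Schwartz φ) ϱ) = Real.pi * φ 0 := by
    have h5 : (2 : ℂ) * ∫ ϱ in Ioi (0:ℝ), (FT1Schwartz φ) ϱ
        = 2 * ((Real.pi : ℂ) * φ 0) := by
      rw [← h2, h3]; ring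
    exact mul_left_cancel₀ two_ne_zero h5
  rw [h4]
  ring
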